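/- arXiv:1701.03435 — 5 statements merged into one kernel-verified Lean document; each statement's English description precedes it below -/
import Mathlib

section
/- Let σ be a type and let f, g be nonzero multivariate polynomials in MvPolynomial σ ℚ[t]. Then f·g is nonzero, ω₀(f·g) = ω₀(f) + ω₀(g), and the initial form of the product is the product of the initial forms: in(f·g) = in(f)·in(g) in MvPolynomial σ ℚ. -/
open Polynomial

/-- The t-adic valuation of the ℚ[t]-coefficient of minimal valuation of a
multivariate polynomial over ℚ[t]. -/
noncomputable def omega0 {σ : Type*} (f : MvPolynomial σ ℚ[X]) : ℕ :=
  sInf ((fun m => (f.coeff m).rootMultiplicity 0) '' ↑f.support)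

/-- The initial form of `f`: the coefficient at each monomial is the coefficient of
`t ^ ω₀(f)` in the corresponding ℚ[t]-coefficient of `f`. -/
noncomputable def initForm {σ : Type*} (f : MvPolynomial σ ℚ[X]) : MvPolynomial σ ℚ :=
  ∑ m ∈ f.support, MvPolynomial.monomial m ((f.coeff m).coeff (omega0 f))

/-- Swap: view an `MvPolynomial σ ℚ[X]` as a polynomial in `t` over `MvPolynomial σ ℚ`. -/
noncomputable def TT {σ : Type*} : MvPolynomial σ ℚ[X] →+* Polynomial (MvPolynomial σ ℚ) :=
  MvPolynomial.eval₂Hom (Polynomial.mapRingHom MvPolynomial.C)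
    (fun i => Polynomial.C (MvPolynomial.X i))

lemma coeff_TT {σ : Type*} (f : MvPolynomial σ ℚ[X]) (n : ℕ) (m : σ →₀ ℕ) :
    ((TT f).coeff n).coeff m = (f.coeff m).coeff n := by
  classical
  induction f using MvPolynomial.induction_on generalizing n m with
  | C a =>
      simp only [TT, MvPolynomial.eval₂Hom_C, Polynomial.coe_mapRingHom, Polynomial.coeff_map,
        MvPolynomial.coeff_C]
      split <;> simp
  | add p q hp hq =>
      simp [hp, hq]
  | mul_X p i hp =>
      have : TT (p * MvPolynomial.X i) = TT p * Polynomial.C (MvPolynomial.X i) := by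
        simp [TT]
      rw [this, Polynomial.coeff_mul_C, MvPolynomial.coeff_mul_X',
        MvPolynomial.coeff_mul_X']
      split
      · exact hp n _
      · simp

lemma TT_injective {σ : Type*} : Function.Injective (TT (σ := σ)) := by
  intro f g h
  ext m n
  have := coeff_TT f n m
  rw [h, coeff_TT] at this
  exact this.symm

lemma omega0_eq {σ : Type*} (f : MvPolynomial σ ℚ[X]) (hf : f ≠ 0) :
    omega0 f = (TT f).natTrailingDegree := by
  have hTf : TT f ≠ 0 := fun h => hf (TT_injective (by simpa using h))
  set N := (TT f).natTrailingDegree with hN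
  -- each element of the valuation set is ≥ N
  have hval : ∀ m, (f.coeff m).rootMultiplicity 0 = (f.coeff m).natTrailingDegree :=
    fun m => Polynomial.rootMultiplicity_eq_natTrailingDegree'
  have hmem : N ∈ (fun m => (f.coeff m).rootMultiplicity 0) '' ↑f.support := by
    have h1 : (TT f).coeff N ≠ 0 := Polynomial.trailingCoeff_nonzero_iff_nonzero.mpr hTf
    obtain ⟨m, hm⟩ := MvPolynomial.ne_zero_iff.mp h1
    rw [coeff_TT] at hm
    refine ⟨m, ?_, ?_⟩
    · simp only [Finset.mem_coe, MvPolynomial.mem_support_iff]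
      intro h0; rw [h0] at hm; simp at hm
    · show rootMultiplicity 0 (f.coeff m) = N
      rw [hval]
      have hfm : f.coeff m ≠ 0 := by intro h0; rw [h0] at hm; simp at hm
      refine le_antisymm (Polynomial.natTrailingDegree_le_of_ne_zero hm) ?_
      by_contra hlt
      push_neg at hlt
      have : (TT f).coeff ((f.coeff m).natTrailingDegree) = 0 :=
        Polynomial.coeff_eq_zero_of_lt_natTrailingDegree hlt
      have h2 := congrArg (fun p => MvPolynomial.coeff m p) this
      simp only [coeff_TT] at h2
      exact Polynomial.trailingCoeff_nonzero_iff_nonzero.mpr hfm (by simpa using h2)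
  have hlb : ∀ k ∈ (fun m => (f.coeff m).rootMultiplicity 0) '' ↑f.support, N ≤ k := by
    rintro k ⟨m, hm, rfl⟩
    simp only [Finset.mem_coe, MvPolynomial.mem_support_iff] at hm
    show N ≤ rootMultiplicity 0 (f.coeff m)
    rw [hval]
    by_contra hlt
    push_neg at hlt
    have : (TT f).coeff ((f.coeff m).natTrailingDegree) = 0 :=
      Polynomial.coeff_eq_zero_of_lt_natTrailingDegree hlt
    have h2 := congrArg (fun p => MvPolynomial.coeff m p) this
    simp only [coeff_TT] at h2
    exact Polynomial.trailingCoeff_nonzero_iff_nonzero.mpr hm (by simpa using h2)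
  exact le_antisymm (Nat.sInf_le hmem) (le_csInf ⟨N, hmem⟩ hlb)

lemma coeff_initForm {σ : Type*} (f : MvPolynomial σ ℚ[X]) (m : σ →₀ ℕ) :
    (initForm f).coeff m = (f.coeff m).coeff (omega0 f) := by
  classical
  rw [initForm, MvPolynomial.coeff_sum]
  simp only [MvPolynomial.coeff_monomial]
  rw [Finset.sum_ite_eq' f.support m]
  split
  · rfl
  · rename_i h
    rw [MvPolynomial.notMem_support_iff.mp h]
    simp

lemma initForm_eq {σ : Type*} (f : MvPolynomial σ ℚ[X]) (hf : f ≠ 0) :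
    initForm f = (TT f).trailingCoeff := by
  ext m
  rw [coeff_initForm, Polynomial.trailingCoeff, ← omega0_eq f hf, coeff_TT]

theorem initForm_mul {σ : Type*} (f g : MvPolynomial σ ℚ[X]) (hf : f ≠ 0) (hg : g ≠ 0) :
    f * g ≠ 0 ∧ omega0 (f * g) = omega0 f + omega0 g ∧
      initForm (f * g) = initForm f * initForm g := by
  have hfg : f * g ≠ 0 := mul_ne_zero hf hg
  have hTf : TT f ≠ 0 := fun h => hf (TT_injective (by simpa using h))
  have hTg : TT g ≠ 0 := fun h => hg (TT_injective (by simpa using h))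
  refine ⟨hfg, ?_, ?_⟩
  · rw [omega0_eq _ hfg, omega0_eq _ hf, omega0_eq _ hg, map_mul,
      Polynomial.natTrailingDegree_mul hTf hTg]
  · rw [initForm_eq _ hfg, initForm_eq _ hf, initForm_eq _ hg, map_mul,
      Polynomial.trailingCoeff_mul]
end

section
/- Let σ be a type and let f₁, …, f_r ∈ MvPolynomial σ ℚ[t] be polynomials that are linearly independent over the field ℚ(t) (after viewing their coefficients in ℚ(t) via the coefficientwise embedding ℚ[t] ↪ ℚ(t)). Then there exist nonzero g₁, …, g_r ∈ MvPolynomial σ ℚ[t], each lying in the ℚ(t)-linear span of f₁, …, f_r and spanning the same ℚ(t)-subspace, such that the initial forms in(g₁), …, in(g_r) are linearly independent over ℚ in MvPolynomial σ ℚ. In particular, the ℚ-dimension of the ℚ-span of {in(g) : g a nonzero ℚ[t]-coefficient element of the ℚ(t)-span of f₁,…,f_r} is at least r. -/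
open Polynomial

/-- The coefficientwise embedding `MvPolynomial σ ℚ[t] → MvPolynomial σ ℚ(t)`. -/
noncomputable def toRatFunc {σ : Type*} (f : MvPolynomial σ ℚ[X]) :
    MvPolynomial σ (RatFunc ℚ) :=
  MvPolynomial.map (algebraMap ℚ[X] (RatFunc ℚ)) f

namespace InitFormAux

variable {σ : Type*}

lemma omega0_eq (f : MvPolynomial σ ℚ[X]) :
    omega0 f = sInf ((fun m => (f.coeff m).natTrailingDegree) '' ↑f.support) := by
  simp only [omega0, Polynomial.rootMultiplicity_eq_natTrailingDegree']

lemma omega0_le {f : MvPolynomial σ ℚ[X]} {m : σ →₀ ℕ} (h : f.coeff m ≠ 0) :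
    omega0 f ≤ (f.coeff m).natTrailingDegree := by
  rw [omega0_eq]
  exact Nat.sInf_le ⟨m, by simpa [MvPolynomial.mem_support_iff] using h, rfl⟩

lemma exists_omega0 {f : MvPolynomial σ ℚ[X]} (hf : f ≠ 0) :
    ∃ m : σ →₀ ℕ, f.coeff m ≠ 0 ∧ (f.coeff m).natTrailingDegree = omega0 f := by
  have hne : ((fun m => (f.coeff m).natTrailingDegree) '' ↑f.support).Nonempty := by
    obtain ⟨m, hm⟩ := MvPolynomial.support_nonempty.mpr hf
    exact ⟨_, ⟨m, hm, rfl⟩⟩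
  have hmem := Nat.sInf_mem hne
  rw [omega0_eq]
  obtain ⟨m, hm, hval⟩ := hmem
  exact ⟨m, MvPolynomial.mem_support_iff.mp hm, hval⟩

lemma le_omega0 {f : MvPolynomial σ ℚ[X]} (hf : f ≠ 0) {k : ℕ}
    (h : ∀ m : σ →₀ ℕ, f.coeff m ≠ 0 → k ≤ (f.coeff m).natTrailingDegree) :
    k ≤ omega0 f := by
  obtain ⟨m, hm, hval⟩ := exists_omega0 hf
  exact hval ▸ h m hm

lemma le_ntd_of_X_pow_dvd {q : ℚ[X]} {n : ℕ} (h : X ^ n ∣ q) (hq : q ≠ 0) :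
    n ≤ q.natTrailingDegree := by
  rw [Polynomial.X_pow_dvd_iff] at h
  by_contra hlt
  push_neg at hlt
  exact (Polynomial.coeff_natTrailingDegree_ne_zero.mpr hq) (h _ hlt)

lemma X_pow_omega0_dvd (f : MvPolynomial σ ℚ[X]) (m : σ →₀ ℕ) :
    (X : ℚ[X]) ^ omega0 f ∣ f.coeff m := by
  by_cases h : f.coeff m = 0
  · simp [h]
  · rw [Polynomial.X_pow_dvd_iff]
    intro d hd
    exact Polynomial.coeff_eq_zero_of_lt_natTrailingDegree (lt_of_lt_of_le hd (omega0_le h))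

lemma coeff_initForm (f : MvPolynomial σ ℚ[X]) (m : σ →₀ ℕ) :
    (initForm f).coeff m = (f.coeff m).coeff (omega0 f) := by
  classical
  unfold initForm
  rw [MvPolynomial.coeff_sum]
  rw [Finset.sum_congr rfl (fun m' _ => MvPolynomial.coeff_monomial m m' _)]
  rw [Finset.sum_ite_eq' f.support m (fun m' => (f.coeff m').coeff (omega0 f))]
  by_cases h : m ∈ f.support
  · rw [if_pos h]
  · rw [if_neg h, MvPolynomial.notMem_support_iff.mp h, Polynomial.coeff_zero]

lemma initForm_ne_zero {f : MvPolynomial σ ℚ[X]} (hf : f ≠ 0) : initForm f ≠ 0 := by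
  obtain ⟨m, hm, hval⟩ := exists_omega0 hf
  intro h0
  have := coeff_initForm f m
  rw [h0] at this
  rw [← hval] at this
  exact (Polynomial.coeff_natTrailingDegree_ne_zero.mpr hm) (by simpa using this.symm)

lemma toRatFunc_injective : Function.Injective (toRatFunc (σ := σ)) :=
  MvPolynomial.map_injective _ (IsFractionRing.injective ℚ[X] (RatFunc ℚ))

lemma toRatFunc_ne_zero {f : MvPolynomial σ ℚ[X]} (hf : f ≠ 0) : toRatFunc f ≠ 0 := by
  intro h
  exact hf (toRatFunc_injective (by simpa [toRatFunc] using h))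

/-- Selecting coordinates: if a family of functionals on `Fin r → K` has trivial common kernel,
then some `n` of them already have trivial common kernel on a subspace of dimension `≤ n`. -/
lemma exists_coords_aux {K : Type*} [Field K] {ι : Type*} [Nonempty ι] {r : ℕ}
    (φ : ι → ((Fin r → K) →ₗ[K] K)) :
    ∀ (n : ℕ) (W : Submodule K (Fin r → K)), Module.finrank K W ≤ n →
      (∀ c ∈ W, (∀ m, φ m c = 0) → c = 0) →
      ∃ m : Fin n → ι, ∀ c ∈ W, (∀ k, φ (m k) c = 0) → c = 0 := by
  intro n
  induction n with
  | zero =>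
    intro W hW _
    refine ⟨Fin.elim0, fun c hc _ => ?_⟩
    have hbot : W = ⊥ := Submodule.finrank_eq_zero.mp (Nat.le_zero.mp hW)
    simpa [hbot] using hc
  | succ n ih =>
    intro W hW hker
    by_cases hbot : W = ⊥
    · exact ⟨fun _ => Classical.arbitrary ι, fun c hc _ => by simpa [hbot] using hc⟩
    · obtain ⟨x, hxW, hx0⟩ := Submodule.exists_mem_ne_zero_of_ne_bot hbot
      have hm0 : ∃ m₀, φ m₀ x ≠ 0 := by
        by_contra h
        push_neg at h
        exact hx0 (hker x hxW h)
      obtain ⟨m₀, hm₀⟩ := hm0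
      have hlt : W ⊓ LinearMap.ker (φ m₀) < W := by
        refine lt_of_le_of_ne inf_le_left (fun h => hm₀ ?_)
        have : x ∈ W ⊓ LinearMap.ker (φ m₀) := h.symm ▸ hxW
        simpa using this.2
      have hfr : Module.finrank K ↥(W ⊓ LinearMap.ker (φ m₀)) ≤ n := by
        have := Submodule.finrank_lt_finrank_of_lt hlt
        omega
      obtain ⟨m, hm⟩ := ih (W ⊓ LinearMap.ker (φ m₀)) hfr
        (fun c hc h => hker c hc.1 h)
      refine ⟨Fin.cons m₀ m, fun c hc h => ?_⟩
      have hc' : c ∈ W ⊓ LinearMap.ker (φ m₀) :=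
        ⟨hc, by simpa using h 0⟩
      exact hm c hc' (fun k => by simpa using h k.succ)

/-- From a linearly independent family of multivariate polynomials over a field, one can select
monomials making the corresponding coefficient matrix invertible. -/
lemma exists_det_ne_zero {K : Type*} [Field K] {r : ℕ} (v : Fin r → MvPolynomial σ K)
    (hv : LinearIndependent K v) :
    ∃ m : Fin r → (σ →₀ ℕ),
      (Matrix.of fun i k => (v i).coeff (m k)).det ≠ 0 := by
  set φ : (σ →₀ ℕ) → ((Fin r → K) →ₗ[K] K) := fun mm =>
    { toFun := fun c => ∑ i, c i * (v i).coeff mm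
      map_add' := by intro a b; simp [add_mul, Finset.sum_add_distrib]
      map_smul' := by intro a b; simp [Finset.mul_sum, mul_assoc] } with hφdef
  have hφ : ∀ c : Fin r → K, (∀ mm, φ mm c = 0) → c = 0 := by
    intro c hc
    have hzero : ∑ i, c i • v i = 0 := by
      apply MvPolynomial.ext
      intro mm
      rw [MvPolynomial.coeff_sum]
      have hcm : ∑ i, c i * (v i).coeff mm = 0 := hc mm
      simpa [MvPolynomial.coeff_smul, smul_eq_mul] using hcm
    funext i
    exact Fintype.linearIndependent_iff.mp hv c hzero i
  obtain ⟨m, hm⟩ := exists_coords_aux φ r ⊤ (by simp) (fun c _ h => hφ c h)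
  refine ⟨m, fun hdet => ?_⟩
  have hdetT : (Matrix.of fun i k => (v i).coeff (m k)).transpose.det = 0 := by
    rw [Matrix.det_transpose]; exact hdet
  obtain ⟨c, hc0, hcv⟩ := (Matrix.exists_mulVec_eq_zero_iff).mpr hdetT
  apply hc0
  refine hm c trivial (fun k => ?_)
  have := congrFun hcv k
  simpa [hφdef, Matrix.mulVec, dotProduct, mul_comm] using this

variable {r : ℕ}

/-- The coefficient matrix of a family at a chosen family of monomials. -/
noncomputable def Dmat (m : Fin r → (σ →₀ ℕ)) (g : Fin r → MvPolynomial σ ℚ[X]) :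
    Matrix (Fin r) (Fin r) ℚ[X] :=
  Matrix.of fun i k => (g i).coeff (m k)

lemma sum_omega0_le_ntd (m : Fin r → (σ →₀ ℕ)) (g : Fin r → MvPolynomial σ ℚ[X])
    (hdet : (Dmat m g).det ≠ 0) :
    ∑ i, omega0 (g i) ≤ (Dmat m g).det.natTrailingDegree := by
  apply le_ntd_of_X_pow_dvd _ hdet
  rw [Matrix.det_apply']
  apply Finset.dvd_sum
  intro τ _
  apply dvd_mul_of_dvd_right
  have hsum : ∑ i, omega0 (g i) = ∑ k, omega0 (g (τ k)) := (Equiv.sum_comp τ _).symm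
  rw [hsum, ← Finset.prod_pow_eq_pow_sum]
  exact Finset.prod_dvd_prod_of_dvd _ _ (fun k _ => X_pow_omega0_dvd (g (τ k)) (m k))

/-- Updating one member of a linearly independent family by a linear combination whose
`j`-th coefficient is nonzero preserves linear independence and the span. -/
lemma update_li_span {K M : Type*} [Field K] [AddCommGroup M] [Module K M] {n : ℕ}
    {v : Fin n → M} (hv : LinearIndependent K v) (j : Fin n) (b : Fin n → K) (hbj : b j ≠ 0)
    (w : Fin n → M) (hwi : ∀ i, i ≠ j → w i = v i) (hwj : w j = ∑ i, b i • v i) :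
    LinearIndependent K w ∧
      Submodule.span K (Set.range w) = Submodule.span K (Set.range v) := by
  constructor
  · rw [Fintype.linearIndependent_iff]
    intro d hd
    have hexp : ∑ i, (d j * b i + if i = j then 0 else d i) • v i = 0 := by
      have h1 : ∑ i, (d j * b i + if i = j then 0 else d i) • v i =
          (∑ i, (d j * b i) • v i) + ∑ i, (if i = j then 0 else d i) • v i := by
        rw [← Finset.sum_add_distrib]
        exact Finset.sum_congr rfl (fun i _ => add_smul _ _ _)
      have h2 : ∑ i, (if i = j then 0 else d i) • v i =
          ∑ i ∈ Finset.univ.erase j, d i • v i := by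
        rw [← Finset.sum_erase (Finset.univ)
          (f := fun i => (if i = j then 0 else d i) • v i) (a := j) (by simp)]
        exact Finset.sum_congr rfl (fun i hi => by
          rw [if_neg (Finset.ne_of_mem_erase hi)])
      have h3 : ∑ i, (d j * b i) • v i = d j • ∑ i, b i • v i := by
        rw [Finset.smul_sum]
        exact Finset.sum_congr rfl (fun i _ => (smul_smul _ _ _).symm)
      have h4 : ∑ i, d i • w i =
          d j • w j + ∑ i ∈ Finset.univ.erase j, d i • w i :=
        (Finset.add_sum_erase _ _ (Finset.mem_univ j)).symm
      have h5 : ∑ i ∈ Finset.univ.erase j, d i • w i =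
          ∑ i ∈ Finset.univ.erase j, d i • v i :=
        Finset.sum_congr rfl (fun i hi => by rw [hwi i (Finset.ne_of_mem_erase hi)])
      rw [h1, h2, h3, ← hwj, ← h5, ← h4, hd]
    have hall := Fintype.linearIndependent_iff.mp hv _ hexp
    have hdj : d j = 0 := by
      have h6 : d j * b j = 0 := by simpa using hall j
      exact (mul_eq_zero.mp h6).resolve_right hbj
    intro i
    by_cases hi : i = j
    · rw [hi]; exact hdj
    · have := hall i
      simpa [if_neg hi, hdj] using this
  · apply le_antisymm
    · rw [Submodule.span_le]
      rintro _ ⟨i, rfl⟩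
      by_cases hi : i = j
      · rw [hi, hwj]
        exact Submodule.sum_mem _ (fun i _ =>
          Submodule.smul_mem _ _ (Submodule.subset_span ⟨i, rfl⟩))
      · rw [hwi i hi]
        exact Submodule.subset_span ⟨i, rfl⟩
    · rw [Submodule.span_le]
      rintro _ ⟨i, rfl⟩
      by_cases hi : i = j
      · rw [hi]
        have h1 : b j • v j = w j - ∑ i ∈ Finset.univ.erase j, b i • w i := by
          have h5 : ∑ i ∈ Finset.univ.erase j, b i • w i =
              ∑ i ∈ Finset.univ.erase j, b i • v i :=
            Finset.sum_congr rfl (fun i hi => by rw [hwi i (Finset.ne_of_mem_erase hi)])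
          rw [hwj, h5, ← Finset.add_sum_erase _ _ (Finset.mem_univ j), add_sub_cancel_right]
        have h2 : b j • v j ∈ Submodule.span K (Set.range w) := by
          rw [h1]
          exact sub_mem (Submodule.subset_span ⟨j, rfl⟩)
            (Submodule.sum_mem _ (fun i _ =>
              Submodule.smul_mem _ _ (Submodule.subset_span ⟨i, rfl⟩)))
        have h3 := Submodule.smul_mem _ (b j)⁻¹ h2
        rwa [inv_smul_smul₀ hbj] at h3
      · rw [← hwi i hi]
        exact Submodule.subset_span ⟨i, rfl⟩

lemma step (m : Fin r → (σ →₀ ℕ)) (g : Fin r → MvPolynomial σ ℚ[X])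
    (hli : LinearIndependent (RatFunc ℚ) (fun i => toRatFunc (g i)))
    (hdet : (Dmat m g).det ≠ 0)
    (hdep : ¬ LinearIndependent ℚ (fun i => initForm (g i))) :
    ∃ g' : Fin r → MvPolynomial σ ℚ[X],
      LinearIndependent (RatFunc ℚ) (fun i => toRatFunc (g' i)) ∧
      Submodule.span (RatFunc ℚ) (Set.range fun i => toRatFunc (g' i)) =
        Submodule.span (RatFunc ℚ) (Set.range fun i => toRatFunc (g i)) ∧
      (Dmat m g').det ≠ 0 ∧
      (Dmat m g').det.natTrailingDegree = (Dmat m g).det.natTrailingDegree ∧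
      ∑ i, omega0 (g i) < ∑ i, omega0 (g' i) := by
  classical
  obtain ⟨c, hcsum, j0, hj0⟩ := Fintype.not_linearIndependent_iff.mp hdep
  set s : Finset (Fin r) := Finset.univ.filter (fun i => c i ≠ 0) with hs_def
  have hs : s.Nonempty := ⟨j0, by simp [hs_def, hj0]⟩
  obtain ⟨j, hjs, hj⟩ := Finset.exists_mem_eq_sup' hs (fun i => omega0 (g i))
  set ω := s.sup' hs (fun i => omega0 (g i)) with hω_def
  have hcj : c j ≠ 0 := by simpa [hs_def] using hjs
  have hωmax : ∀ i, c i ≠ 0 → omega0 (g i) ≤ ω := by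
    intro i hi
    have hmem : i ∈ s := by rw [hs_def]; exact Finset.mem_filter.mpr ⟨Finset.mem_univ i, hi⟩
    exact Finset.le_sup' (fun i => omega0 (g i)) hmem
  have hωj : ω = omega0 (g j) := hj
  set a : Fin r → ℚ[X] := fun i => Polynomial.C (c i) * X ^ (ω - omega0 (g i)) with ha_def
  have haj : a j = Polynomial.C (c j) := by
    have hz : ω - omega0 (g j) = 0 := by omega
    simp only [ha_def, hz, pow_zero, mul_one]
  set h : MvPolynomial σ ℚ[X] := ∑ i, a i • g i with hh_def
  have hcoeff : ∀ mm : σ →₀ ℕ,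
      MvPolynomial.coeff mm h = ∑ i, a i * MvPolynomial.coeff mm (g i) := by
    intro mm
    rw [hh_def, MvPolynomial.coeff_sum]
    exact Finset.sum_congr rfl (fun i _ => by rw [MvPolynomial.coeff_smul]; rfl)
  have hterm : ∀ (i : Fin r) (mm : σ →₀ ℕ) (d : ℕ),
      (a i * MvPolynomial.coeff mm (g i)).coeff d =
      c i * (if ω - omega0 (g i) ≤ d then
        (MvPolynomial.coeff mm (g i)).coeff (d - (ω - omega0 (g i))) else 0) := by
    intro i mm d
    have hcomm : a i * MvPolynomial.coeff mm (g i)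
        = Polynomial.C (c i) * (MvPolynomial.coeff mm (g i) * X ^ (ω - omega0 (g i))) := by
      rw [ha_def]; ring
    rw [hcomm, Polynomial.coeff_C_mul, Polynomial.coeff_mul_X_pow']
  have hkey : ∀ mm : σ →₀ ℕ, (X : ℚ[X]) ^ (ω + 1) ∣ MvPolynomial.coeff mm h := by
    intro mm
    rw [Polynomial.X_pow_dvd_iff]
    intro d hd
    rw [hcoeff, Polynomial.finset_sum_coeff]
    rcases Nat.lt_succ_iff_lt_or_eq.mp hd with hdω | rfl
    · apply Finset.sum_eq_zero
      intro i _
      rw [hterm]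
      by_cases hci : c i = 0
      · simp [hci]
      · split_ifs with he
        · have h1 : omega0 (g i) ≤ ω := hωmax i hci
          have h2 : d - (ω - omega0 (g i)) < omega0 (g i) := by omega
          by_cases hq : MvPolynomial.coeff mm (g i) = 0
          · simp [hq]
          · rw [Polynomial.coeff_eq_zero_of_lt_natTrailingDegree
              (lt_of_lt_of_le h2 (omega0_le hq)), mul_zero]
        · rw [mul_zero]
    · have hrw : ∀ i ∈ Finset.univ, (a i * MvPolynomial.coeff mm (g i)).coeff ω
          = c i * (initForm (g i)).coeff mm := by
        intro i _
        rw [hterm]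
        by_cases hci : c i = 0
        · simp [hci]
        · have h1 : omega0 (g i) ≤ ω := hωmax i hci
          rw [if_pos (Nat.sub_le _ _), Nat.sub_sub_self h1, coeff_initForm]
      rw [Finset.sum_congr rfl hrw]
      have hzero := congrArg (MvPolynomial.coeff mm) hcsum
      rw [MvPolynomial.coeff_sum] at hzero
      simpa [MvPolynomial.coeff_smul, smul_eq_mul] using hzero
  have himg : toRatFunc h = ∑ i, (algebraMap ℚ[X] (RatFunc ℚ) (a i)) • toRatFunc (g i) := by
    rw [hh_def]
    unfold toRatFunc
    rw [map_sum]
    exact Finset.sum_congr rfl (fun i _ => by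
      rw [MvPolynomial.smul_eq_C_mul, map_mul, MvPolynomial.map_C,
        ← MvPolynomial.smul_eq_C_mul])
  have hh0 : h ≠ 0 := by
    intro h0
    have h1 := Fintype.linearIndependent_iff.mp hli
      (fun i => algebraMap ℚ[X] (RatFunc ℚ) (a i))
      (by rw [← himg, h0]; simp [toRatFunc]) j
    rw [haj] at h1
    have h2 : Polynomial.C (c j) = 0 :=
      (map_eq_zero_iff _ (IsFractionRing.injective ℚ[X] (RatFunc ℚ))).mp h1
    exact hcj (by simpa using h2)
  have homega : ω + 1 ≤ omega0 h :=
    le_omega0 hh0 (fun mm hmm => le_ntd_of_X_pow_dvd (hkey mm) hmm)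
  set g' := Function.update g j h with hg'_def
  have hg'j : g' j = h := Function.update_self _ _ _
  have hg'i : ∀ i, i ≠ j → g' i = g i := fun i hi => Function.update_of_ne hi _ _
  have hbj : algebraMap ℚ[X] (RatFunc ℚ) (a j) ≠ 0 := by
    rw [haj]
    intro h1
    have h2 : Polynomial.C (c j) = 0 :=
      (map_eq_zero_iff _ (IsFractionRing.injective ℚ[X] (RatFunc ℚ))).mp h1
    exact hcj (by simpa using h2)
  obtain ⟨hli', hspan'⟩ := update_li_span hli j
    (fun i => algebraMap ℚ[X] (RatFunc ℚ) (a i)) hbj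
    (fun i => toRatFunc (g' i))
    (fun i hi => by simp only [hg'i i hi])
    (by simp only [hg'j]; exact himg)
  have hDrow : Dmat m g' = (Dmat m g).updateRow j (∑ i, a i • (Dmat m g) i) := by
    ext i k
    by_cases hi : i = j
    · subst hi
      rw [Matrix.updateRow_self]
      have hLHS : Dmat m g' i k = MvPolynomial.coeff (m k) h := by
        simp [Dmat, hg'j]
      rw [hLHS, hcoeff]
      simp [Dmat, Finset.sum_apply]
    · rw [Matrix.updateRow_ne hi]
      simp [Dmat, hg'i i hi]
  have hdet' : (Dmat m g').det = Polynomial.C (c j) * (Dmat m g).det := by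
    rw [hDrow, Matrix.det_updateRow_sum, haj, smul_eq_mul]
  have hCne : (Polynomial.C (c j) : ℚ[X]) ≠ 0 := Polynomial.C_ne_zero.mpr hcj
  refine ⟨g', hli', hspan', ?_, ?_, ?_⟩
  · rw [hdet']
    exact mul_ne_zero hCne hdet
  · rw [hdet', Polynomial.natTrailingDegree_mul hCne hdet,
      Polynomial.natTrailingDegree_C, zero_add]
  · have hsum1 : ∑ i, omega0 (g' i)
        = omega0 (g' j) + ∑ i ∈ Finset.univ.erase j, omega0 (g' i) :=
      (Finset.add_sum_erase _ _ (Finset.mem_univ j)).symm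
    have hsum2 : ∑ i, omega0 (g i)
        = omega0 (g j) + ∑ i ∈ Finset.univ.erase j, omega0 (g i) :=
      (Finset.add_sum_erase _ _ (Finset.mem_univ j)).symm
    have herase : ∑ i ∈ Finset.univ.erase j, omega0 (g' i)
        = ∑ i ∈ Finset.univ.erase j, omega0 (g i) :=
      Finset.sum_congr rfl (fun i hi => by rw [hg'i i (Finset.ne_of_mem_erase hi)])
    have hωj' : omega0 (g' j) = omega0 h := by rw [hg'j]
    omega

lemma loop (m : Fin r → (σ →₀ ℕ)) : ∀ (μ : ℕ) (g : Fin r → MvPolynomial σ ℚ[X]),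
    LinearIndependent (RatFunc ℚ) (fun i => toRatFunc (g i)) →
    (Dmat m g).det ≠ 0 →
    (Dmat m g).det.natTrailingDegree ≤ μ + ∑ i, omega0 (g i) →
    ∃ g' : Fin r → MvPolynomial σ ℚ[X],
      LinearIndependent (RatFunc ℚ) (fun i => toRatFunc (g' i)) ∧
      Submodule.span (RatFunc ℚ) (Set.range fun i => toRatFunc (g' i)) =
        Submodule.span (RatFunc ℚ) (Set.range fun i => toRatFunc (g i)) ∧
      LinearIndependent ℚ (fun i => initForm (g' i)) := by
  intro μ
  induction μ with
  | zero =>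
    intro g h1 h2 h3
    by_cases hdep : LinearIndependent ℚ (fun i => initForm (g i))
    · exact ⟨g, h1, rfl, hdep⟩
    · exfalso
      obtain ⟨g', _, _, hd0, hdeq, hsum⟩ := step m g h1 h2 hdep
      have hb := sum_omega0_le_ntd m g' hd0
      omega
  | succ μ ih =>
    intro g h1 h2 h3
    by_cases hdep : LinearIndependent ℚ (fun i => initForm (g i))
    · exact ⟨g, h1, rfl, hdep⟩
    · obtain ⟨g', hli', hspan', hd0, hdeq, hsum⟩ := step m g h1 h2 hdep
      obtain ⟨g'', a2, b2, c2⟩ := ih g' hli' hd0 (by omega)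
      exact ⟨g'', a2, b2.trans hspan', c2⟩

end InitFormAux

theorem exists_initForm_linearIndependent {σ : Type*} (r : ℕ)
    (f : Fin r → MvPolynomial σ ℚ[X])
    (hf : LinearIndependent (RatFunc ℚ) (fun i => toRatFunc (f i))) :
    (∃ g : Fin r → MvPolynomial σ ℚ[X],
      (∀ i, g i ≠ 0) ∧
      (∀ i, toRatFunc (g i) ∈
        Submodule.span (RatFunc ℚ) (Set.range fun i => toRatFunc (f i))) ∧
      Submodule.span (RatFunc ℚ) (Set.range fun i => toRatFunc (g i)) =
        Submodule.span (RatFunc ℚ) (Set.range fun i => toRatFunc (f i)) ∧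
      LinearIndependent ℚ (fun i => initForm (g i))) ∧
    (r : Cardinal) ≤ Module.rank ℚ (Submodule.span ℚ
      {h : MvPolynomial σ ℚ | ∃ g₀ : MvPolynomial σ ℚ[X], g₀ ≠ 0 ∧
        toRatFunc g₀ ∈
          Submodule.span (RatFunc ℚ) (Set.range fun i => toRatFunc (f i)) ∧
        h = initForm g₀}) := by
  classical
  obtain ⟨m, hdetL⟩ := InitFormAux.exists_det_ne_zero (fun i => toRatFunc (f i)) hf
  have hdetQ : (InitFormAux.Dmat m f).det ≠ 0 := by
    intro h0
    apply hdetL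
    have hmap : (Matrix.of fun i k => (toRatFunc (f i)).coeff (m k)) =
        (InitFormAux.Dmat m f).map (algebraMap ℚ[X] (RatFunc ℚ)) := by
      ext i k
      simp [InitFormAux.Dmat, toRatFunc, MvPolynomial.coeff_map]
    rw [hmap, ← RingHom.mapMatrix_apply, ← RingHom.map_det, h0, map_zero]
  obtain ⟨g, hgli, hgspan, hginit⟩ := InitFormAux.loop m
    ((InitFormAux.Dmat m f).det.natTrailingDegree) f hf hdetQ (Nat.le_add_right _ _)
  have hne : ∀ i, g i ≠ 0 := fun i h0 =>
    hgli.ne_zero i (show toRatFunc (g i) = 0 by rw [h0]; simp [toRatFunc])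
  have hmem : ∀ i, toRatFunc (g i) ∈
      Submodule.span (RatFunc ℚ) (Set.range fun i => toRatFunc (f i)) :=
    fun i => hgspan ▸ Submodule.subset_span ⟨i, rfl⟩
  refine ⟨⟨g, hne, hmem, hgspan, hginit⟩, ?_⟩
  set S : Set (MvPolynomial σ ℚ) := {h : MvPolynomial σ ℚ | ∃ g₀ : MvPolynomial σ ℚ[X], g₀ ≠ 0 ∧
      toRatFunc g₀ ∈
        Submodule.span (RatFunc ℚ) (Set.range fun i => toRatFunc (f i)) ∧
      h = initForm g₀} with hS_def
  have hmemS : ∀ i, initForm (g i) ∈ S := fun i => ⟨g i, hne i, hmem i, rfl⟩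
  set N := Submodule.span ℚ S with hN_def
  have hu : LinearIndependent ℚ
      (fun i => (⟨initForm (g i), Submodule.subset_span (hmemS i)⟩ : N)) := by
    apply LinearIndependent.of_comp N.subtype
    convert hginit
    rfl
  have hcard := hu.cardinal_lift_le_rank
  simp only [Cardinal.mk_fin, Cardinal.lift_natCast, Cardinal.lift_uzero] at hcard
  exact_mod_cast hcard
end

section
/- Let k be a field of characteristic zero, n a natural number, and G a k-linear subspace of k^n (i.e. G : Submodule k (Fin n → k)). For a polynomial f ∈ MvPolynomial (Fin n) k, the following are equivalent: (i) for every λ ∈ G, substituting X_i ↦ X_i + λ_i into f returns f (i.e. the algebra map sending X_i to X_i + C(λ_i) fixes f); (ii) f lies in the k-subalgebra of MvPolynomial (Fin n) k generated by the linear forms ∑_{i} a_i X_i, where a ranges over all vectors a ∈ k^n satisfying ∑_i a_i λ_i = 0 for every λ ∈ G. -/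
open MvPolynomial

section Aux

open Matrix

variable {k : Type*} [Field k] {n : ℕ}

lemma dual_mem {k : Type*} [Field k] {n : ℕ} (G : Submodule k (Fin n → k)) (v : Fin n → k)
    (hv : ∀ a : Fin n → k, (∀ l ∈ G, ∑ i, a i * l i = 0) → ∑ i, a i * v i = 0) : v ∈ G := by
  by_contra h
  set π := G.mkQ with hπ
  have hπv : π v ≠ 0 := by
    simpa [π, Submodule.Quotient.mk_eq_zero] using h
  obtain ⟨φ, hφ⟩ : ∃ φ : Module.Dual k ((Fin n → k) ⧸ G), φ (π v) ≠ 0 := by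
    by_contra hc
    push_neg at hc
    exact hπv ((Module.forall_dual_apply_eq_zero_iff k (π v)).mp hc)
  set ξ : (Fin n → k) →ₗ[k] k := φ.comp π with hξ
  have key : ∀ x : Fin n → k, ∑ i, ξ (Pi.single i 1) * x i = ξ x := by
    intro x
    conv_rhs => rw [pi_eq_sum_univ x, map_sum]
    refine Finset.sum_congr rfl fun i _ => ?_
    rw [_root_.map_smul, smul_eq_mul, mul_comm]
    congr 1
    congr 1
    ext j
    simp [Pi.single_apply, eq_comm]
  have hW : ∀ l ∈ G, ∑ i, ξ (Pi.single i 1) * l i = 0 := by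
    intro l hl
    rw [key]
    have : π l = 0 := by simpa [π, Submodule.Quotient.mk_eq_zero] using hl
    simp [ξ, this]
  have := hv _ hW
  rw [key] at this
  exact hφ this

lemma exists_adapted_basis {k : Type*} [Field k] {n : ℕ} (W : Submodule k (Fin n → k)) :
    ∃ b : Module.Basis (Fin n) k (Fin n → k),
      W ≤ Submodule.span k (b '' {i | b i ∈ W}) := by
  obtain ⟨W', hc⟩ := Submodule.exists_isCompl W
  let e := Submodule.prodEquivOfIsCompl W W' hc
  let bW := Module.finBasis k W
  let bW' := Module.finBasis k W'
  let b0 := (bW.prod bW').map e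
  have hcard : Fintype.card (Fin (Module.finrank k W) ⊕ Fin (Module.finrank k W')) = n := by
    have := Module.finrank_eq_card_basis b0
    simpa [Module.finrank_pi] using this.symm
  let σ := Fintype.equivFinOfCardEq hcard
  refine ⟨b0.reindex σ, ?_⟩
  intro w hw
  have hinl : ∀ i, b0 (Sum.inl i) = (bW i : Fin n → k) := by
    intro i
    simp [b0, e, Module.Basis.prod_apply, Submodule.coe_prodEquivOfIsCompl]
  -- w = e (⟨w, hw⟩, 0)
  have hw0 : (⟨w, hw⟩ : W) ∈ Submodule.span k (Set.range bW) := Module.Basis.mem_span bW _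
  have : w ∈ Submodule.map (W.subtype) (Submodule.span k (Set.range bW)) :=
    ⟨⟨w, hw⟩, hw0, rfl⟩
  rw [Submodule.map_span] at this
  refine Submodule.span_mono ?_ this
  rintro x ⟨_, ⟨i, rfl⟩, rfl⟩
  refine ⟨σ (Sum.inl i), ?_, ?_⟩ <;>
    simp [Module.Basis.reindex_apply, hinl, SetLike.coe_mem]

lemma var_not_mem_of_shift_invariant [CharZero k] (g : MvPolynomial (Fin n) k) (j : Fin n)
    (hg : ∀ c : k, aeval (fun i => (X i : MvPolynomial (Fin n) k)
      + C ((Pi.single j c : Fin n → k) i)) g = g) :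
    j ∉ g.vars := by
  classical
  set Φ : MvPolynomial (Fin n) k →ₐ[k] Polynomial (MvPolynomial (Fin n) k) :=
    MvPolynomial.aeval (fun i => Polynomial.C (X i) +
      if i = j then (Polynomial.X : Polynomial (MvPolynomial (Fin n) k)) else 0) with hΦ
  have step1 : ∀ c : k, Polynomial.aeval ((MvPolynomial.C c : MvPolynomial (Fin n) k)) (Φ g)
      = g := by
    intro c
    have hcomp : ((Polynomial.aeval ((MvPolynomial.C c : MvPolynomial (Fin n) k))).restrictScalars
          k).comp Φ =
        MvPolynomial.aeval (fun i => (X i : MvPolynomial (Fin n) k)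
          + MvPolynomial.C ((Pi.single j c : Fin n → k) i)) := by
      apply MvPolynomial.algHom_ext
      intro i
      by_cases h : i = j <;>
        simp [Φ, h, Pi.single_apply]
    calc Polynomial.aeval ((MvPolynomial.C c : MvPolynomial (Fin n) k)) (Φ g)
        = (((Polynomial.aeval ((MvPolynomial.C c : MvPolynomial (Fin n) k))).restrictScalars
            k).comp Φ) g := rfl
      _ = g := by rw [hcomp]; exact hg c
  have step2 : Φ g = Polynomial.C g := by
    have hroot : ∀ c : k, (Φ g - Polynomial.C g).IsRoot (MvPolynomial.C c) := by
      intro c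
      have h1 := step1 c
      rw [Polynomial.coe_aeval_eq_eval] at h1
      simp [Polynomial.IsRoot, h1]
    have hinf : {x : MvPolynomial (Fin n) k | (Φ g - Polynomial.C g).IsRoot x}.Infinite :=
      Set.infinite_of_injective_forall_mem (MvPolynomial.C_injective (Fin n) k) hroot
    have h0 := Polynomial.eq_zero_of_infinite_isRoot _ hinf
    have := sub_eq_zero.mp h0
    exact this
  -- Θ : replace X_j by the polynomial variable
  set Θ : MvPolynomial (Fin n) k →ₐ[k] Polynomial (MvPolynomial (Fin n) k) :=
    MvPolynomial.aeval (fun i => if i = j then (Polynomial.X : Polynomial (MvPolynomial (Fin n) k))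
      else Polynomial.C (X i)) with hΘ
  have step3 : Θ g = Polynomial.C g := by
    have hcomp : ((Polynomial.aeval ((Polynomial.X : Polynomial (MvPolynomial (Fin n) k))
          - Polynomial.C (X j))).restrictScalars k).comp Φ = Θ := by
      apply MvPolynomial.algHom_ext
      intro i
      by_cases h : i = j <;> simp [Φ, Θ, h]
    calc Θ g = ((Polynomial.aeval ((Polynomial.X : Polynomial (MvPolynomial (Fin n) k))
          - Polynomial.C (X j))).restrictScalars k) (Φ g) := by rw [← hcomp]; rfl
      _ = Polynomial.C g := by
          rw [step2]
          simp
  -- evaluate at 0 : X_j ↦ 0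
  have step4 : MvPolynomial.aeval
      (fun i => if i = j then 0 else (X i : MvPolynomial (Fin n) k)) g = g := by
    have hcomp : ((Polynomial.aeval ((0 : MvPolynomial (Fin n) k))).restrictScalars k).comp Θ =
        MvPolynomial.aeval (fun i => if i = j then 0 else (X i : MvPolynomial (Fin n) k)) := by
      apply MvPolynomial.algHom_ext
      intro i
      by_cases h : i = j <;> simp [Θ, h]
    calc MvPolynomial.aeval (fun i => if i = j then 0 else (X i : MvPolynomial (Fin n) k)) g
        = ((Polynomial.aeval ((0 : MvPolynomial (Fin n) k))).restrictScalars k) (Θ g) := by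
          rw [← hcomp]; rfl
      _ = g := by rw [step3]; simp
  -- conclude j ∉ vars g
  have hmem : g ∈ MvPolynomial.supported k ({j}ᶜ : Set (Fin n)) := by
    rw [← step4]
    have : MvPolynomial.aeval
        (fun i => if i = j then 0 else (X i : MvPolynomial (Fin n) k)) g ∈
        Algebra.adjoin k (Set.range (fun i => if i = j then 0
          else (X i : MvPolynomial (Fin n) k))) := by
      rw [Algebra.adjoin_range_eq_range_aeval]
      exact ⟨g, rfl⟩
    refine Algebra.adjoin_le ?_ this
    rintro x ⟨i, rfl⟩
    by_cases h : i = j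
    · simp only [h, if_pos rfl]
      exact Subalgebra.zero_mem _
    · simp only [if_neg h]
      show X i ∈ MvPolynomial.supported k ({j}ᶜ : Set (Fin n))
      rw [MvPolynomial.X_mem_supported]
      simp [h]
  intro hj
  have := (MvPolynomial.mem_supported.mp hmem) hj
  simp at this

noncomputable def linHom (A : Matrix (Fin n) (Fin n) k) :
    MvPolynomial (Fin n) k →ₐ[k] MvPolynomial (Fin n) k :=
  aeval (fun i => ∑ t, C (A i t) * X t)

noncomputable def transHom (l : Fin n → k) :
    MvPolynomial (Fin n) k →ₐ[k] MvPolynomial (Fin n) k :=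
  aeval (fun i => X i + C (l i))

lemma linHom_comp (A B : Matrix (Fin n) (Fin n) k) :
    (linHom B).comp (linHom A) = linHom (A * B) := by
  apply MvPolynomial.algHom_ext
  intro i
  show linHom B (linHom A (X i)) = _
  rw [linHom, linHom, linHom, aeval_X, aeval_X, map_sum]
  simp_rw [_root_.map_mul, aeval_C, aeval_X, algebraMap_eq]
  calc ∑ t, C (A i t) * ∑ u, C (B t u) * X u
      = ∑ t, ∑ u, (C (A i t) * C (B t u)) * X u := by
        simp_rw [Finset.mul_sum, mul_assoc]
    _ = ∑ u, ∑ t, (C (A i t * B t u)) * X u := by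
        rw [Finset.sum_comm]; simp_rw [C_mul]
    _ = ∑ u, C ((A * B) i u) * X u := by
        simp_rw [← Finset.sum_mul, ← map_sum, Matrix.mul_apply]

lemma linHom_one : (linHom (1 : Matrix (Fin n) (Fin n) k)) = AlgHom.id k _ := by
  apply MvPolynomial.algHom_ext
  intro i
  show linHom 1 (X i) = X i
  rw [linHom, aeval_X]
  rw [Finset.sum_eq_single i]
  · simp
  · intro t _ ht
    simp [Matrix.one_apply, Ne.symm ht]
  · simp

lemma trans_linHom (A : Matrix (Fin n) (Fin n) k) (l : Fin n → k) :
    (transHom l).comp (linHom A) = (linHom A).comp (transHom (A.mulVec l)) := by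
  apply MvPolynomial.algHom_ext
  intro i
  show transHom l (linHom A (X i)) = linHom A (transHom (A.mulVec l) (X i))
  rw [linHom, transHom, transHom, aeval_X, aeval_X, map_sum, map_add, aeval_X]
  simp_rw [_root_.map_mul, aeval_C, aeval_X, algebraMap_eq, mul_add, Finset.sum_add_distrib, ← C_mul,
    ← map_sum]

  congr 1

noncomputable def basisMatrixInv (b : Module.Basis (Fin n) k (Fin n → k)) :
    Invertible (Matrix.of (fun i t => b i t)) := by
  classical
  have h := (Pi.basisFun k (Fin n)).invertibleToMatrix b
  have heq : (Pi.basisFun k (Fin n)).toMatrix b = (Matrix.of fun i t => b i t)ᵀ := by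
    ext i t
    simp [Module.Basis.toMatrix_apply]
  rw [heq] at h
  exact Matrix.invertibleOfInvertibleTranspose _

def annSub (G : Submodule k (Fin n → k)) : Submodule k (Fin n → k) where
  carrier := {a | ∀ l ∈ G, ∑ i, a i * l i = 0}
  add_mem' := by
    intro a b ha hb l hl
    simp [add_mul, Finset.sum_add_distrib, ha l hl, hb l hl]
  zero_mem' := by intro l hl; simp
  smul_mem' := by
    intro c a ha l hl
    simp [smul_eq_mul, mul_assoc, ← Finset.mul_sum, ha l hl]

lemma mem_annSub {G : Submodule k (Fin n → k)} {a : Fin n → k} :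
    a ∈ annSub G ↔ ∀ l ∈ G, ∑ i, a i * l i = 0 := Iff.rfl

end Aux

/-- Nagata's translation action: a polynomial is invariant under translation by all
elements of a subspace `G ⊆ k^n` iff it lies in the subalgebra generated by the linear
forms whose coefficient vectors annihilate `G`. -/
theorem nagata_invariants (k : Type*) [Field k] [CharZero k] (n : ℕ)
    (G : Submodule k (Fin n → k)) (f : MvPolynomial (Fin n) k) :
    (∀ l ∈ G, MvPolynomial.aeval (fun i => (X i : MvPolynomial (Fin n) k) + C (l i)) f = f) ↔
    f ∈ Algebra.adjoin k {g : MvPolynomial (Fin n) k |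
      ∃ a : Fin n → k, (∀ l ∈ G, ∑ i, a i * l i = 0) ∧
        g = ∑ i, C (a i) * X i} := by
  classical
  constructor
  · intro H
    obtain ⟨b, hspan⟩ := exists_adapted_basis (annSub G)
    set M : Matrix (Fin n) (Fin n) k := Matrix.of (fun i t => b i t) with hM
    haveI : Invertible M := basisMatrixInv b
    set N := ⅟M with hNdef
    have hMN : M * N = 1 := mul_invOf_self M
    have hNM : N * M = 1 := invOf_mul_self M
    have hψψ' : (linHom M).comp (linHom N) = AlgHom.id k (MvPolynomial (Fin n) k) := by
      rw [linHom_comp, hNM, linHom_one]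
    have hψ'ψ : (linHom N).comp (linHom M) = AlgHom.id k (MvPolynomial (Fin n) k) := by
      rw [linHom_comp, hMN, linHom_one]
    set g := linHom N f with hg
    have hfg : linHom M g = f := AlgHom.congr_fun hψψ' f
    have hshift : ∀ j : Fin n, b j ∉ annSub G → ∀ c : k,
        aeval (fun i => (X i : MvPolynomial (Fin n) k)
          + C ((Pi.single j c : Fin n → k) i)) g = g := by
      intro j hj c
      set v := N.mulVec (Pi.single j c) with hv
      have hMv : M.mulVec v = Pi.single j c := by
        rw [hv, Matrix.mulVec_mulVec, hMN, Matrix.one_mulVec]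
      have hvG : v ∈ G := by
        apply dual_mem
        intro a ha
        have haspan := hspan (mem_annSub.mpr ha)
        set L : (Fin n → k) →ₗ[k] k :=
          { toFun := fun x => ∑ i, x i * v i
            map_add' := by
              intro x y
              simp [add_mul, Finset.sum_add_distrib]
            map_smul' := by
              intro c x
              simp [smul_eq_mul, mul_assoc, Finset.mul_sum] } with hL
        have hker : Submodule.span k (b '' {i | b i ∈ annSub G}) ≤ LinearMap.ker L := by
          rw [Submodule.span_le]
          rintro x ⟨i, hi, rfl⟩
          simp only [SetLike.mem_coe, LinearMap.mem_ker]
          show ∑ t, b i t * v t = 0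
          have h1 : ∑ t, b i t * v t = M.mulVec v i := rfl
          have h2 : i ≠ j := fun h => hj (h ▸ hi)
          rw [h1, hMv]
          simp [Pi.single_apply, h2]
        exact hker haspan
      have hTf : transHom v f = f := H v hvG
      have e1 : (transHom v).comp (linHom M) =
          (linHom M).comp (transHom (Pi.single j c)) := by
        have h := trans_linHom M v
        rwa [hMv] at h
      have key : linHom M (transHom (Pi.single j c) g) = f := by
        calc linHom M (transHom (Pi.single j c) g)
            = ((linHom M).comp (transHom (Pi.single j c))) g := rfl
          _ = ((transHom v).comp (linHom M)) g := by rw [e1]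
          _ = transHom v (linHom M g) := rfl
          _ = f := by rw [hfg]; exact hTf
      have : transHom (Pi.single j c) g = g := by
        calc transHom (Pi.single j c) g
            = (linHom N) (linHom M (transHom (Pi.single j c) g)) :=
              (AlgHom.congr_fun hψ'ψ _).symm
          _ = linHom N f := by rw [key]
          _ = g := rfl
      exact this
    have hvars : (g.vars : Set (Fin n)) ⊆ {i | b i ∈ annSub G} := by
      intro j hj
      by_contra hjs
      exact var_not_mem_of_shift_invariant g j (hshift j hjs) hj
    have hsupp : g ∈ MvPolynomial.supported k {i | b i ∈ annSub G} :=
      MvPolynomial.mem_supported.mpr hvars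
    rw [MvPolynomial.supported_eq_adjoin_X] at hsupp
    have hmap : f ∈ (Algebra.adjoin k (X '' {i | b i ∈ annSub G})).map (linHom M) :=
      ⟨g, hsupp, hfg⟩
    rw [AlgHom.map_adjoin] at hmap
    refine Algebra.adjoin_mono ?_ hmap
    rintro x ⟨_, ⟨i, hi, rfl⟩, rfl⟩
    refine ⟨fun t => b i t, hi, ?_⟩
    show linHom M (X i) = ∑ t, C (b i t) * X t
    rw [linHom, aeval_X]
    rfl
  · intro hf l hl
    have hle : Algebra.adjoin k {g : MvPolynomial (Fin n) k |
        ∃ a : Fin n → k, (∀ l ∈ G, ∑ i, a i * l i = 0) ∧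
          g = ∑ i, C (a i) * X i} ≤
        AlgHom.equalizer (transHom l) (AlgHom.id k (MvPolynomial (Fin n) k)) := by
      apply Algebra.adjoin_le
      rintro x ⟨a, ha, rfl⟩
      show transHom l (∑ i, C (a i) * X i) = AlgHom.id k _ (∑ i, C (a i) * X i)
      rw [transHom, map_sum]
      simp_rw [_root_.map_mul, aeval_C, aeval_X, algebraMap_eq, mul_add, Finset.sum_add_distrib,
        ← C_mul, ← map_sum, ha l hl, map_zero, add_zero]
      rfl
    exact hle hf
end

section
/- Fix m ≥ 1 and for 1 ≤ l ≤ m let e_l ∈ MvPolynomial (Fin m) ℚ[t] be the deformed elementary symmetric polynomial e_l := ∑_{1 ≤ j₁ < ⋯ < j_l ≤ m} t^{(j₁−1)+⋯+(j_l−l)} X_{j₁}⋯X_{j_l}. Let U be the ℚ[t]-subalgebra of MvPolynomial (Fin m) ℚ[t] generated by e₁, …, e_m. Then the initial algebra of U — the ℚ-subalgebra of MvPolynomial (Fin m) ℚ generated by {in(f) : f ∈ U, f ≠ 0} — equals the ℚ-subalgebra generated by the m monomials X₁, X₁X₂, …, X₁X₂⋯X_m. In other words, {e₁,…,e_m} is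 a Khovanskii basis of U. -/
open Polynomial

/-- The deformed elementary symmetric polynomial
`e_l = ∑_{1 ≤ j₁ < ⋯ < j_l ≤ m} t^{(j₁-1)+⋯+(j_l-l)} X_{j₁}⋯X_{j_l}` of Sturmfels–Xu
(indices 0-indexed: for a subset `s` of size `l` the exponent is `∑_{j∈s} j - l(l-1)/2`). -/
noncomputable def eSym (m l : ℕ) : MvPolynomial (Fin m) ℚ[X] :=
  ∑ s ∈ Finset.powersetCard l (Finset.univ : Finset (Fin m)),
    MvPolynomial.C ((X : ℚ[X]) ^ ((∑ j ∈ s, (j : ℕ)) - l * (l - 1) / 2)) *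
      ∏ j ∈ s, MvPolynomial.X j

/-- The subalgebra of `MvPolynomial (Fin m) ℚ[t]` generated by the deformed elementary
symmetric polynomials `e₁, …, e_m`. -/
noncomputable def eSymAlgebra (m : ℕ) : Subalgebra ℚ[X] (MvPolynomial (Fin m) ℚ[X]) :=
  Algebra.adjoin ℚ[X] {h : MvPolynomial (Fin m) ℚ[X] | ∃ l, 1 ≤ l ∧ l ≤ m ∧ h = eSym m l}

namespace KBaux

variable {σ : Type*}

/-- Evaluation at `t = 0`, coefficientwise. -/
noncomputable def ev0 (σ : Type*) : MvPolynomial σ ℚ[X] →+* MvPolynomial σ ℚ :=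
  MvPolynomial.map (Polynomial.evalRingHom (0:ℚ))

lemma ev0_coeff (g : MvPolynomial σ ℚ[X]) (mo : σ →₀ ℕ) :
    (ev0 σ g).coeff mo = (g.coeff mo).coeff 0 := by
  simp [ev0, MvPolynomial.coeff_map, coeff_zero_eq_eval_zero]

lemma ev0_C (p : ℚ[X]) : ev0 σ (MvPolynomial.C p) = MvPolynomial.C (p.coeff 0) := by
  simp [ev0, coeff_zero_eq_eval_zero]

lemma ev0_X (i : σ) : ev0 σ (MvPolynomial.X i) = MvPolynomial.X i := by
  simp [ev0]

lemma sum_monomial_coeff_subset (p : MvPolynomial σ ℚ) {S : Finset (σ →₀ ℕ)}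
    (hS : p.support ⊆ S) :
    ∑ mo ∈ S, MvPolynomial.monomial mo (p.coeff mo) = p := by
  rw [← Finset.sum_subset hS, MvPolynomial.support_sum_monomial_coeff]
  intro x _ hx
  rw [MvPolynomial.notMem_support_iff.mp hx, map_zero]

/-- The fundamental computation: if `g` has nonzero reduction at `t = 0` then
`C (X^k) * g` is nonzero with `ω₀ = k` and initial form `ev0 g`. -/
lemma key (k : ℕ) (g : MvPolynomial σ ℚ[X]) (hg : ev0 σ g ≠ 0) :
    MvPolynomial.C (X ^ k) * g ≠ 0 ∧ omega0 (MvPolynomial.C (X ^ k) * g) = k ∧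
      initForm (MvPolynomial.C (X ^ k) * g) = ev0 σ g := by
  have hg0 : g ≠ 0 := by rintro rfl; simp at hg
  set f := MvPolynomial.C (X ^ k) * g with hfdef
  have hXk : (X : ℚ[X]) ^ k ≠ 0 := pow_ne_zero _ X_ne_zero
  have hf0 : f ≠ 0 := mul_ne_zero (by simpa using hXk) hg0
  have hcoeff : ∀ mo, f.coeff mo = X ^ k * g.coeff mo := fun mo => MvPolynomial.coeff_C_mul _ _ _
  have hsupp : f.support = g.support := by
    ext mo
    simp only [MvPolynomial.mem_support_iff, hcoeff, mul_ne_zero_iff]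
    exact ⟨fun h => h.2, fun h => ⟨hXk, h⟩⟩
  have hval : ∀ mo ∈ g.support, (f.coeff mo).rootMultiplicity 0
      = k + (g.coeff mo).natTrailingDegree := by
    intro mo hmo
    rw [rootMultiplicity_eq_natTrailingDegree', hcoeff,
      natTrailingDegree_mul hXk (MvPolynomial.mem_support_iff.mp hmo), natTrailingDegree_X_pow]
  obtain ⟨mo₀, hmo₀⟩ : ∃ mo, (g.coeff mo).coeff 0 ≠ 0 := by
    by_contra h
    push_neg at h
    exact hg (MvPolynomial.ext _ _ fun mo => by rw [ev0_coeff, h mo, MvPolynomial.coeff_zero])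
  have hmo₀s : mo₀ ∈ g.support := by
    rw [MvPolynomial.mem_support_iff]
    intro h; rw [h] at hmo₀; simp at hmo₀
  have hntd₀ : (g.coeff mo₀).natTrailingDegree = 0 :=
    natTrailingDegree_eq_zero.mpr (Or.inr hmo₀)
  have homega : omega0 f = k := by
    unfold omega0
    apply le_antisymm
    · apply Nat.sInf_le
      refine ⟨mo₀, by rwa [hsupp], ?_⟩
      show rootMultiplicity 0 (MvPolynomial.coeff mo₀ f) = k
      rw [hval mo₀ hmo₀s, hntd₀, Nat.add_zero]
    · refine le_csInf ⟨rootMultiplicity 0 (MvPolynomial.coeff mo₀ f),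
        ⟨mo₀, by rwa [hsupp], rfl⟩⟩ ?_
      rintro b ⟨mo, hmo, rfl⟩
      rw [hsupp] at hmo
      show k ≤ rootMultiplicity 0 (MvPolynomial.coeff mo f)
      rw [hval mo hmo]
      exact Nat.le_add_right _ _
  refine ⟨hf0, homega, ?_⟩
  unfold initForm
  rw [homega, hsupp]
  have hck : ∀ q : ℚ[X], (X ^ k * q).coeff k = q.coeff 0 := fun q => by
    simpa using coeff_X_pow_mul q k 0
  calc ∑ mo ∈ g.support, MvPolynomial.monomial mo ((f.coeff mo).coeff k)
      = ∑ mo ∈ g.support, MvPolynomial.monomial mo ((ev0 σ g).coeff mo) := by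
        refine Finset.sum_congr rfl fun mo _ => ?_
        rw [hcoeff, hck, ev0_coeff]
    _ = ev0 σ g := by
        apply sum_monomial_coeff_subset
        intro mo hmo
        rw [MvPolynomial.mem_support_iff] at hmo ⊢
        rw [ev0_coeff] at hmo
        intro h; rw [h] at hmo; simp at hmo

lemma X_pow_mul_divByMonic {k : ℕ} {p : ℚ[X]} (hp : (X:ℚ[X]) ^ k ∣ p) :
    X ^ k * (p /ₘ X ^ k) = p := by
  conv_rhs => rw [← modByMonic_add_div p (X ^ k)]
  rw [(modByMonic_eq_zero_iff_dvd (monic_X_pow k)).2 hp, zero_add]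

lemma poly_decomp (p : ℚ[X]) (hp : p ≠ 0) :
    ∃ k q, q.coeff 0 ≠ 0 ∧ p = X ^ k * q := by
  set k := p.natTrailingDegree
  have hdvd : (X:ℚ[X]) ^ k ∣ p :=
    X_pow_dvd_iff.2 fun d hd => coeff_eq_zero_of_lt_natTrailingDegree hd
  refine ⟨k, p /ₘ X ^ k, ?_, (X_pow_mul_divByMonic hdvd).symm⟩
  have h1 : (X ^ k * (p /ₘ X ^ k)).coeff (0 + k) = (p /ₘ X ^ k).coeff 0 :=
    coeff_X_pow_mul _ k 0
  rw [X_pow_mul_divByMonic hdvd, Nat.zero_add] at h1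
  rw [← h1]
  exact trailingCoeff_nonzero_iff_nonzero.2 hp

lemma nat_sum_ge (t : Finset ℕ) :
    (∑ j ∈ Finset.range t.card, j) ≤ ∑ j ∈ t, j ∧
      ((∑ j ∈ t, j) = ∑ j ∈ Finset.range t.card, j → t = Finset.range t.card) := by
  induction t using Finset.strongInduction with
  | _ t ih =>
    rcases t.eq_empty_or_nonempty with rfl | ht
    · simp
    · have hMt : t.max' ht ∈ t := t.max'_mem ht
      set M := t.max' ht with hM
      have hsub : t ⊆ Finset.range (M + 1) := fun j hj =>
        Finset.mem_range.2 (Nat.lt_succ_of_le (Finset.le_max' t j hj))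
      have hcard : t.card ≤ M + 1 := by
        simpa using Finset.card_le_card hsub
      have hc1 : 1 ≤ t.card := Finset.card_pos.2 ht
      set t' := t.erase M with ht'def
      have ht' : t' ⊂ t := Finset.erase_ssubset hMt
      have hcard' : t'.card = t.card - 1 := Finset.card_erase_of_mem hMt
      obtain ⟨ih1, ih2⟩ := ih t' ht'
      have hsum : ∑ j ∈ t, j = M + ∑ j ∈ t', j := (Finset.add_sum_erase _ _ hMt).symm
      have hrange : ∑ j ∈ Finset.range t.card, j
          = (t.card - 1) + ∑ j ∈ Finset.range (t.card - 1), j := by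
        conv_lhs => rw [show t.card = (t.card - 1) + 1 by omega, Finset.sum_range_succ]
        omega
      rw [hcard'] at ih1 ih2
      constructor
      · rw [hsum, hrange]
        exact Nat.add_le_add (by omega) ih1
      · intro heq
        rw [hsum, hrange] at heq
        have hMeq : M = t.card - 1 ∧ ∑ j ∈ t', j = ∑ j ∈ Finset.range (t.card - 1), j := by
          omega
        have ht'eq : t' = Finset.range (t.card - 1) := ih2 hMeq.2
        have hins : t = insert M t' := (Finset.insert_erase hMt).symm
        have hfin : insert (t.card - 1) (Finset.range (t.card - 1)) = Finset.range t.card := by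
          rw [← Finset.range_add_one]; congr 1; omega
        calc t = insert M t' := hins
          _ = insert (t.card - 1) (Finset.range (t.card - 1)) := by rw [ht'eq, hMeq.1]
          _ = Finset.range t.card := hfin

lemma fin_sum_ge {m : ℕ} (s : Finset (Fin m)) :
    (∑ j ∈ Finset.range s.card, j) ≤ ∑ j ∈ s, (j : ℕ) ∧
      ((∑ j ∈ s, (j : ℕ)) = ∑ j ∈ Finset.range s.card, j →
        s = Finset.univ.filter (fun j : Fin m => (j : ℕ) < s.card)) := by
  have hinj : Function.Injective (Fin.val : Fin m → ℕ) := Fin.val_injective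
  set t := s.image Fin.val with htdef
  have hst : ∑ j ∈ s, (j : ℕ) = ∑ j ∈ t, j := by
    rw [htdef, Finset.sum_image (f := fun j => j) (g := Fin.val) fun x _ y _ h => hinj h]
  have hc : t.card = s.card := Finset.card_image_of_injective _ hinj
  obtain ⟨h1, h2⟩ := nat_sum_ge t
  rw [hc] at h1 h2
  refine ⟨by rw [hst]; exact h1, fun he => ?_⟩
  have ht : t = Finset.range s.card := h2 (by rw [← hst]; exact he)
  ext j
  simp only [Finset.mem_filter, Finset.mem_univ, true_and]
  constructor
  · intro hj
    have : (j : ℕ) ∈ t := Finset.mem_image_of_mem _ hj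
    rw [ht, Finset.mem_range] at this
    exact this
  · intro hj
    have : (j : ℕ) ∈ t := by rw [ht, Finset.mem_range]; exact hj
    rw [htdef, Finset.mem_image] at this
    obtain ⟨j', hj', hjj⟩ := this
    rwa [← hinj hjj]

lemma image_filter_lt {m l : ℕ} (hl : l ≤ m) :
    (Finset.univ.filter (fun j : Fin m => (j : ℕ) < l)).image Fin.val = Finset.range l := by
  ext x
  simp only [Finset.mem_image, Finset.mem_filter, Finset.mem_univ, true_and, Finset.mem_range]
  constructor
  · rintro ⟨j, hj, rfl⟩; exact hj
  · intro hx; exact ⟨⟨x, lt_of_lt_of_le hx hl⟩, hx, rfl⟩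

lemma card_filter_lt {m l : ℕ} (hl : l ≤ m) :
    (Finset.univ.filter (fun j : Fin m => (j : ℕ) < l)).card = l := by
  rw [← Finset.card_image_of_injective _ (Fin.val_injective), image_filter_lt hl,
    Finset.card_range]

lemma sum_filter_lt {m l : ℕ} (hl : l ≤ m) :
    ∑ j ∈ Finset.univ.filter (fun j : Fin m => (j : ℕ) < l), (j : ℕ) = l * (l - 1) / 2 := by
  rw [← Finset.sum_range_id l, ← image_filter_lt hl,
    Finset.sum_image (f := fun j => j) fun x _ y _ h => Fin.val_injective h]

lemma prod_X_eq_monomial (s : Finset σ) :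
    ∏ i ∈ s, (MvPolynomial.X i : MvPolynomial σ ℚ)
      = MvPolynomial.monomial (∑ i ∈ s, Finsupp.single i 1) 1 := by
  classical
  induction s using Finset.cons_induction with
  | empty => simp
  | cons i s hi ih =>
    rw [Finset.prod_cons, Finset.sum_cons, ih, show (MvPolynomial.X i : MvPolynomial σ ℚ)
      = MvPolynomial.monomial (Finsupp.single i 1) 1 from rfl, MvPolynomial.monomial_mul,
      one_mul]

lemma prod_monomial_one {ι : Type*} (s : Finset ι) (d : ι → (σ →₀ ℕ)) :
    ∏ i ∈ s, MvPolynomial.monomial (d i) (1 : ℚ) = MvPolynomial.monomial (∑ i ∈ s, d i) 1 := by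
  classical
  induction s using Finset.cons_induction with
  | empty => simp
  | cons i s hi ih =>
    rw [Finset.prod_cons, Finset.sum_cons, ih, MvPolynomial.monomial_mul, one_mul]

lemma inj_D {m : ℕ} :
    Function.Injective (fun a : Fin m → ℕ =>
      ∑ l : Fin m, a l • (∑ i ∈ Finset.Iic l, Finsupp.single i (1 : ℕ))) := by
  intro a b hab
  simp only at hab
  have key : ∀ c : Fin m → ℕ, ∀ i : Fin m,
      (∑ l : Fin m, c l • (∑ j ∈ Finset.Iic l, Finsupp.single j (1 : ℕ))) i
        = ∑ l ∈ Finset.univ.filter (fun l : Fin m => i ≤ l), c l := by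
    intro c i
    rw [Finsupp.finset_sum_apply, Finset.sum_filter]
    refine Finset.sum_congr rfl fun l _ => ?_
    rw [Finsupp.smul_apply, Finsupp.finset_sum_apply]
    simp only [Finsupp.single_apply]
    rw [Finset.sum_ite_eq' (Finset.Iic l) i (fun _ => 1)]
    by_cases h : i ≤ l <;> simp [h, Finset.mem_Iic]
  have H : ∀ i : Fin m,
      ∑ l ∈ Finset.univ.filter (fun l : Fin m => i ≤ l), a l
        = ∑ l ∈ Finset.univ.filter (fun l : Fin m => i ≤ l), b l := by
    intro i
    rw [← key a i, ← key b i]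
    exact congrArg (fun d : Fin m →₀ ℕ => d i) hab
  have main : ∀ k : ℕ, ∀ i : Fin m, m - (i : ℕ) ≤ k → a i = b i := by
    intro k
    induction k with
    | zero => intro i hi; exact absurd hi (by omega)
    | succ k ih =>
      intro i hik
      have hsplit : Finset.univ.filter (fun l : Fin m => i ≤ l)
          = insert i (Finset.univ.filter (fun l : Fin m => i < l)) := by
        ext l
        simp only [Finset.mem_filter, Finset.mem_univ, true_and, Finset.mem_insert]
        constructor
        · intro h
          rcases eq_or_lt_of_le h with h | h
          · exact Or.inl h.symm
          · exact Or.inr h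
        · rintro (rfl | h)
          · exact le_refl _
          · exact le_of_lt h
      have hnm : i ∉ Finset.univ.filter (fun l : Fin m => i < l) := by
        simp [lt_irrefl]
      have h1 := H i
      rw [hsplit, Finset.sum_insert hnm, Finset.sum_insert hnm] at h1
      have h2 : ∑ l ∈ Finset.univ.filter (fun l : Fin m => i < l), a l
          = ∑ l ∈ Finset.univ.filter (fun l : Fin m => i < l), b l := by
        refine Finset.sum_congr rfl fun l hl => ?_
        have hil : i < l := (Finset.mem_filter.mp hl).2
        exact ih l (by rw [Fin.lt_def] at hil; omega)
      omega
  funext i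
  have hi : (i : ℕ) < m := i.isLt
  exact main m i (by omega)

lemma ev0_eSym {m l : ℕ} (hlm : l ≤ m) :
    ev0 (Fin m) (eSym m l)
      = ∏ j ∈ Finset.univ.filter (fun j : Fin m => (j : ℕ) < l), MvPolynomial.X j := by
  unfold eSym
  rw [map_sum, Finset.sum_eq_single (Finset.univ.filter (fun j : Fin m => (j : ℕ) < l))]
  · rw [map_mul, ev0_C, map_prod]
    have he : (∑ j ∈ Finset.univ.filter (fun j : Fin m => (j : ℕ) < l), (j : ℕ))
        - l * (l - 1) / 2 = 0 := by
      rw [sum_filter_lt hlm]; omega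
    rw [he, pow_zero]
    simp only [Polynomial.coeff_one_zero, map_one, one_mul]
    exact Finset.prod_congr rfl fun j _ => ev0_X j
  · intro s hs hne
    have hcard : s.card = l := (Finset.mem_powersetCard_univ).mp hs
    have hgt : l * (l - 1) / 2 < ∑ j ∈ s, (j : ℕ) := by
      obtain ⟨h1, h2⟩ := fin_sum_ge s
      rw [hcard, Finset.sum_range_id] at h1 h2
      rcases eq_or_lt_of_le h1 with h | h
      · exact absurd (h2 h.symm) hne
      · exact h
    rw [map_mul, ev0_C, Polynomial.coeff_X_pow]
    rw [if_neg (by omega), map_zero, zero_mul]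
  · intro h
    exact absurd ((Finset.mem_powersetCard_univ).mpr (card_filter_lt hlm)) h

end KBaux

/-- `{e₁, …, e_m}` is a Khovanskii basis: the initial algebra of the algebra they generate
is generated by the monomials `X₁, X₁X₂, …, X₁⋯X_m`. -/
theorem eSym_khovanskii_basis (m : ℕ) (hm : 1 ≤ m) :
    Algebra.adjoin ℚ {g : MvPolynomial (Fin m) ℚ |
        ∃ f ∈ eSymAlgebra m, f ≠ 0 ∧ g = initForm f} =
    Algebra.adjoin ℚ (Set.range fun l : Fin m =>
        ∏ i ∈ Finset.Iic l, (MvPolynomial.X i : MvPolynomial (Fin m) ℚ)) := by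
  classical
  set MU : Fin m → MvPolynomial (Fin m) ℚ :=
    fun l => ∏ i ∈ Finset.Iic l, MvPolynomial.X i with hMU
  set E : Fin m → MvPolynomial (Fin m) ℚ[X] := fun l => eSym m ((l : ℕ) + 1) with hE
  have hIic : ∀ l : Fin m, Finset.Iic l
      = Finset.univ.filter (fun j : Fin m => (j : ℕ) < (l : ℕ) + 1) := by
    intro l
    ext j
    simp only [Finset.mem_Iic, Finset.mem_filter, Finset.mem_univ, true_and, Nat.lt_succ_iff]
    exact Fin.le_def
  have hEev0 : ∀ l : Fin m, KBaux.ev0 (Fin m) (E l) = MU l := by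
    intro l
    show KBaux.ev0 (Fin m) (eSym m ((l : ℕ) + 1)) = ∏ i ∈ Finset.Iic l, MvPolynomial.X i
    rw [hIic l]
    exact KBaux.ev0_eSym (by have := l.isLt; omega)
  have hMUmono : ∀ l : Fin m, MU l
      = MvPolynomial.monomial (∑ i ∈ Finset.Iic l, Finsupp.single i 1) 1 := by
    intro l
    exact KBaux.prod_X_eq_monomial _
  have hMUne : ∀ l : Fin m, MU l ≠ 0 := by
    intro l
    rw [hMUmono l]
    simp [MvPolynomial.monomial_eq_zero]
  have hkey0 : ∀ l : Fin m, E l ≠ 0 ∧ initForm (E l) = MU l := by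
    intro l
    have h := KBaux.key 0 (E l) (by rw [hEev0 l]; exact hMUne l)
    rw [pow_zero, map_one, one_mul] at h
    exact ⟨h.1, h.2.2.trans (hEev0 l)⟩
  apply le_antisymm
  · apply Algebra.adjoin_le
    rintro g ⟨f, hfU, hf0, rfl⟩
    have hgens : {h : MvPolynomial (Fin m) ℚ[X] | ∃ l, 1 ≤ l ∧ l ≤ m ∧ h = eSym m l}
        = Set.range E := by
      ext p
      constructor
      · rintro ⟨l, h1, h2, rfl⟩
        refine ⟨⟨l - 1, by omega⟩, ?_⟩
        show eSym m ((l - 1) + 1) = eSym m l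
        congr 1
        omega
      · rintro ⟨l, rfl⟩
        exact ⟨(l : ℕ) + 1, by omega, by have := l.isLt; omega, rfl⟩
    set P : Submonoid (MvPolynomial (Fin m) ℚ[X]) :=
      { carrier := Set.range (fun a : Fin m → ℕ => ∏ l : Fin m, E l ^ a l)
        one_mem' := ⟨fun _ => 0, by simp⟩
        mul_mem' := by
          rintro x y ⟨a, rfl⟩ ⟨b, rfl⟩
          refine ⟨a + b, ?_⟩
          simp only [Pi.add_apply, pow_add, Finset.prod_mul_distrib] } with hPdef
    have hclosure : (Submonoid.closure (Set.range E) : Set (MvPolynomial (Fin m) ℚ[X]))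
        ⊆ (P : Set (MvPolynomial (Fin m) ℚ[X])) := by
      intro x hx
      refine Submonoid.closure_le.mpr ?_ hx
      rintro y ⟨l, rfl⟩
      refine ⟨fun l' => if l' = l then 1 else 0, ?_⟩
      show ∏ l' : Fin m, E l' ^ (if l' = l then 1 else 0) = E l
      rw [Finset.prod_eq_single l (fun b _ hb => by rw [if_neg hb, pow_zero])
        (fun hl => absurd (Finset.mem_univ l) hl), if_pos rfl, pow_one]
    have hspan : f ∈ Submodule.span ℚ[X] (P : Set (MvPolynomial (Fin m) ℚ[X])) := by
      have h1 : f ∈ Subalgebra.toSubmodule (Algebra.adjoin ℚ[X] (Set.range E)) := by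
        rw [← hgens]; exact hfU
      rw [Algebra.adjoin_eq_span] at h1
      exact Submodule.span_mono hclosure h1
    obtain ⟨c, hcsupp, hcsum⟩ := Submodule.mem_span_set.mp hspan
    have hcsum' : ∑ p ∈ c.support, c p • p = f := hcsum
    have hmemP : ∀ p ∈ c.support, ∃ a : Fin m → ℕ, ∏ l : Fin m, E l ^ a l = p := by
      intro p hp
      obtain ⟨a, ha⟩ := hcsupp hp
      exact ⟨a, ha⟩
    choose A hA using hmemP
    have hdec : ∀ p ∈ c.support, ∃ k q, q.coeff 0 ≠ 0 ∧ c p = X ^ k * q :=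
      fun p hp => KBaux.poly_decomp (c p) (Finsupp.mem_support_iff.mp hp)
    choose v d hd0 hcd using hdec
    have hone : c.support.Nonempty := by
      by_contra hemp
      rw [Finset.not_nonempty_iff_eq_empty] at hemp
      apply hf0
      rw [← hcsum', hemp, Finset.sum_empty]
    have hne : c.support.attach.Nonempty := by rwa [Finset.attach_nonempty_iff]
    set V := c.support.attach.inf' hne (fun p => v p.1 p.2) with hVdef
    have hVle : ∀ p : {x // x ∈ c.support}, V ≤ v p.1 p.2 :=
      fun p => Finset.inf'_le _ (Finset.mem_attach _ p)
    set h := ∑ p ∈ c.support.attach,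
      MvPolynomial.C ((X : ℚ[X]) ^ (v p.1 p.2 - V)) *
        (MvPolynomial.C (d p.1 p.2) * ∏ l : Fin m, E l ^ A p.1 p.2 l) with hhdef
    have hfh : f = MvPolynomial.C ((X : ℚ[X]) ^ V) * h := by
      rw [hhdef, Finset.mul_sum, ← hcsum',
        ← Finset.sum_attach c.support (fun p => c p • p)]
      refine Finset.sum_congr rfl fun p _ => ?_
      have hVp : V + (v p.1 p.2 - V) = v p.1 p.2 := by have := hVle p; omega
      conv_rhs => rw [← mul_assoc, ← map_mul, ← pow_add, hVp]
      rw [MvPolynomial.smul_eq_C_mul, hcd p.1 p.2, hA p.1 p.2, map_mul, mul_assoc]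
    have hprodMU : ∀ a : Fin m → ℕ, ∏ l : Fin m, MU l ^ a l
        = MvPolynomial.monomial
            (∑ l : Fin m, a l • (∑ i ∈ Finset.Iic l, Finsupp.single i 1)) 1 := by
      intro a
      calc ∏ l : Fin m, MU l ^ a l
          = ∏ l : Fin m, MvPolynomial.monomial
              (a l • (∑ i ∈ Finset.Iic l, Finsupp.single i 1)) 1 := by
            refine Finset.prod_congr rfl fun l _ => ?_
            rw [hMUmono l, MvPolynomial.monomial_pow, one_pow]
        _ = _ := by rw [KBaux.prod_monomial_one]
    have hev0term : ∀ p : {x // x ∈ c.support},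
        KBaux.ev0 (Fin m) (MvPolynomial.C ((X : ℚ[X]) ^ (v p.1 p.2 - V)) *
          (MvPolynomial.C (d p.1 p.2) * ∏ l : Fin m, E l ^ A p.1 p.2 l))
        = MvPolynomial.C (((X : ℚ[X]) ^ (v p.1 p.2 - V)).coeff 0) *
            (MvPolynomial.C ((d p.1 p.2).coeff 0) * ∏ l : Fin m, MU l ^ A p.1 p.2 l) := by
      intro p
      rw [map_mul, map_mul, KBaux.ev0_C, KBaux.ev0_C, map_prod]
      congr 2
      refine Finset.prod_congr rfl fun l _ => ?_
      rw [map_pow, hEev0 l]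
    obtain ⟨p₀, hp₀mem, hVp₀⟩ := Finset.exists_mem_eq_inf' hne (fun p => v p.1 p.2)
    have hcoeffval : MvPolynomial.coeff
        (∑ l : Fin m, A p₀.1 p₀.2 l • (∑ i ∈ Finset.Iic l, Finsupp.single i 1))
        (KBaux.ev0 (Fin m) h) = (d p₀.1 p₀.2).coeff 0 := by
      rw [hhdef, map_sum, MvPolynomial.coeff_sum, Finset.sum_eq_single p₀]
      · rw [hev0term p₀, hprodMU, MvPolynomial.coeff_C_mul, MvPolynomial.coeff_C_mul,
          MvPolynomial.coeff_monomial, if_pos rfl]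
        have hv0 : v p₀.1 p₀.2 - V = 0 := by
          rw [hVdef, hVp₀]
          omega
        rw [hv0, pow_zero, Polynomial.coeff_one_zero]
        ring
      · intro p hp hpne
        rw [hev0term p, hprodMU, MvPolynomial.coeff_C_mul, MvPolynomial.coeff_C_mul,
          MvPolynomial.coeff_monomial, if_neg, mul_zero, mul_zero]
        intro hDeq
        apply hpne
        have hAeq : A p.1 p.2 = A p₀.1 p₀.2 := KBaux.inj_D hDeq
        have hpp : p.1 = p₀.1 := by rw [← hA p.1 p.2, ← hA p₀.1 p₀.2, hAeq]
        exact Subtype.ext hpp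
      · intro hp
        exact absurd (Finset.mem_attach _ p₀) hp
    have hev0h : KBaux.ev0 (Fin m) h ≠ 0 := by
      intro hz
      rw [hz, MvPolynomial.coeff_zero] at hcoeffval
      exact hd0 p₀.1 p₀.2 hcoeffval.symm
    have hCmem : ∀ r : ℚ, MvPolynomial.C r ∈ Algebra.adjoin ℚ (Set.range MU) := by
      intro r
      rw [← MvPolynomial.algebraMap_eq]
      exact Subalgebra.algebraMap_mem _ _
    rw [hfh, (KBaux.key V h hev0h).2.2, hhdef, map_sum]
    apply Subalgebra.sum_mem
    intro p _
    rw [hev0term p]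
    refine Subalgebra.mul_mem _ (hCmem _) (Subalgebra.mul_mem _ (hCmem _) ?_)
    refine Subalgebra.prod_mem _ fun l _ => Subalgebra.pow_mem _ ?_ _
    exact Algebra.subset_adjoin ⟨l, rfl⟩
  · apply Algebra.adjoin_le
    rintro g ⟨l, rfl⟩
    apply Algebra.subset_adjoin
    exact ⟨E l, Algebra.subset_adjoin ⟨(l : ℕ) + 1, by omega, by have := l.isLt; omega, rfl⟩,
      (hkey0 l).1, (hkey0 l).2.symm⟩
end

section
/- Let m be a natural number and S a finitely generated additive submonoid of Fin m → ℤ. Suppose the monoid algebra AddMonoidAlgebra ℚ S (functions S → ℚ with finite support, with convolution product) is an integral domain that is integrally closed in its field of fractions. Then S is saturated in the subgroup it generates: for every x in the additive subgroup of (Fin m → ℤ) generated by S and every natural number n > 0, if n • x ∈ S then x ∈ S. -/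
private lemma mem_closure_sub (m : ℕ) (S : AddSubmonoid (Fin m → ℤ)) :
    ∀ x ∈ AddSubgroup.closure (S : Set (Fin m → ℤ)), ∃ s ∈ S, ∃ t ∈ S, x = s - t := by
  intro x hx
  induction hx using AddSubgroup.closure_induction with
  | mem a ha => exact ⟨a, ha, 0, S.zero_mem, by simp⟩
  | zero => exact ⟨0, S.zero_mem, 0, S.zero_mem, by simp⟩
  | add a b _ _ iha ihb =>
      obtain ⟨s1, hs1, t1, ht1, rfl⟩ := iha
      obtain ⟨s2, hs2, t2, ht2, rfl⟩ := ihb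
      exact ⟨s1 + s2, S.add_mem hs1 hs2, t1 + t2, S.add_mem ht1 ht2, by abel⟩
  | neg a _ iha =>
      obtain ⟨s1, hs1, t1, ht1, rfl⟩ := iha
      exact ⟨t1, ht1, s1, hs1, by abel⟩

/-- If the semigroup algebra `ℚ[S]` of a finitely generated affine semigroup `S ⊆ ℤ^m`
is a domain integrally closed in its field of fractions (i.e. normal), then `S` is
saturated in the subgroup of `ℤ^m` it generates. -/
theorem saturated_of_normal_monoid_algebra (m : ℕ) (S : AddSubmonoid (Fin m → ℤ))
    (hFG : S.FG)
    (hdom : IsDomain (AddMonoidAlgebra ℚ S))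
    (hic : IsIntegrallyClosed (AddMonoidAlgebra ℚ S)) :
    ∀ x ∈ AddSubgroup.closure (S : Set (Fin m → ℤ)),
      ∀ n : ℕ, 0 < n → n • x ∈ S → x ∈ S := by
  intro x hx n hn hnx
  -- Step 1: write x = s - t with s, t ∈ S
  obtain ⟨s, hs, t, ht, rfl⟩ : ∃ s ∈ S, ∃ t ∈ S, x = s - t := mem_closure_sub m S x hx
  haveI := hdom
  haveI := hic
  set A := AddMonoidAlgebra ℚ S with hA
  let K := FractionRing A
  set sS : S := ⟨s, hs⟩
  set tS : S := ⟨t, ht⟩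
  set wS : S := ⟨n • (s - t), hnx⟩
  have hkey : (n • sS : S) = wS + n • tS := by
    apply Subtype.ext
    push_cast
    show n • s = n • (s - t) + n • t
    rw [smul_sub]
    abel
  have hmul : (AddMonoidAlgebra.single sS (1 : ℚ)) ^ n
      = AddMonoidAlgebra.single wS 1 * (AddMonoidAlgebra.single tS 1) ^ n := by
    rw [AddMonoidAlgebra.single_pow, AddMonoidAlgebra.single_pow,
      AddMonoidAlgebra.single_mul_single, hkey]
    simp
  set φ := algebraMap A K
  have htne : φ (AddMonoidAlgebra.single tS 1) ≠ 0 := by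
    rw [map_ne_zero_iff φ (IsFractionRing.injective A K)]
    exact fun h => one_ne_zero (AddMonoidAlgebra.single_eq_zero.mp h)
  set ξ : K := φ (AddMonoidAlgebra.single sS 1) / φ (AddMonoidAlgebra.single tS 1)
  have hξn : ξ ^ n = φ (AddMonoidAlgebra.single wS 1) := by
    rw [div_pow, div_eq_iff (pow_ne_zero n htne), ← map_pow, ← map_pow, ← map_mul]
    exact congrArg φ hmul
  have hint : IsIntegral A ξ := by
    refine ⟨Polynomial.X ^ n - Polynomial.C (AddMonoidAlgebra.single wS 1),
      Polynomial.monic_X_pow_sub_C _ hn.ne', ?_⟩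
    simp [Polynomial.eval₂_sub, Polynomial.eval₂_pow, hξn]
    exact sub_self _
  obtain ⟨f, hf⟩ := IsIntegrallyClosed.isIntegral_iff.mp hint
  have hfA : f * AddMonoidAlgebra.single tS 1 = AddMonoidAlgebra.single sS 1 := by
    apply IsFractionRing.injective A K
    rw [map_mul, hf]
    exact div_mul_cancel₀ _ htne
  -- push to the full group algebra
  let Φ := AddMonoidAlgebra.mapDomainRingHom ℚ S.subtype
  have hΦf : Φ f * AddMonoidAlgebra.single (t : Fin m → ℤ) 1
      = AddMonoidAlgebra.single (s : Fin m → ℤ) 1 := by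
    have := congrArg Φ hfA
    rwa [map_mul, show Φ (AddMonoidAlgebra.single tS 1)
        = AddMonoidAlgebra.single (t : Fin m → ℤ) 1 from AddMonoidAlgebra.mapDomain_single,
      show Φ (AddMonoidAlgebra.single sS 1)
        = AddMonoidAlgebra.single (s : Fin m → ℤ) 1 from AddMonoidAlgebra.mapDomain_single]
      at this
  have hΦf' : Φ f = AddMonoidAlgebra.single (s - t) 1 := by
    have h2 := congrArg (· * AddMonoidAlgebra.single (-t) (1 : ℚ)) hΦf
    simp only [mul_assoc, AddMonoidAlgebra.single_mul_single, add_neg_cancel, one_mul,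
      mul_one] at h2
    rw [← AddMonoidAlgebra.one_def, mul_one] at h2
    rwa [sub_eq_add_neg]
  have hsupp : (s - t) ∈ (Φ f).coeff.support := by
    rw [hΦf']
    simp
  have : (Φ f).coeff.support ⊆ f.coeff.support.image S.subtype := Finsupp.mapDomain_support
  obtain ⟨u, _, hu⟩ := Finset.mem_image.mp (this hsupp)
  rw [← hu]
  exact u.2
end
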